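/- arXiv:2410.19952 — 2 statements merged into one kernel-verified Lean document; each statement's English description precedes it below -/
import Mathlib

section
/- Let M be a positive definite real block matrix of the form M = [[δ, δ m₁ᵀ, m₂ᵀ], [δ m₁, δ M₁₁, m₁ m₂ᵀ], [m₂, m₂ m₁ᵀ, M₂₂]], where δ is a scalar, M₁₁ and M₂₂ are square matrices, and m₁, m₂ are column vectors of the appropriate dimensions. Then the (2,3)-block and the (3,2)-block of the inverse matrix M⁻¹ are zero matrices. -/
open Matrix

/-- The block matrix `M = [[δ, δ m₁ᵀ, m₂ᵀ], [δ m₁, δ M₁₁, m₁ m₂ᵀ], [m₂, m₂ m₁ᵀ, M₂₂]]`,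
indexed by `Unit ⊕ a ⊕ b`. If it is positive definite, then the `(2,3)` and `(3,2)` blocks of
its inverse vanish. -/
theorem stmt_0 {a b : Type*} [Fintype a] [Fintype b] [DecidableEq a] [DecidableEq b]
    (δ : ℝ) (m₁ : a → ℝ) (m₂ : b → ℝ) (M₁₁ : Matrix a a ℝ) (M₂₂ : Matrix b b ℝ)
    (M : Matrix (Unit ⊕ a ⊕ b) (Unit ⊕ a ⊕ b) ℝ)
    (h11 : ∀ u v : Unit, M (Sum.inl u) (Sum.inl v) = δ)
    (h12 : ∀ (u : Unit) (i : a), M (Sum.inl u) (Sum.inr (Sum.inl i)) = δ * m₁ i)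
    (h13 : ∀ (u : Unit) (j : b), M (Sum.inl u) (Sum.inr (Sum.inr j)) = m₂ j)
    (h21 : ∀ (i : a) (u : Unit), M (Sum.inr (Sum.inl i)) (Sum.inl u) = δ * m₁ i)
    (h22 : ∀ i i' : a, M (Sum.inr (Sum.inl i)) (Sum.inr (Sum.inl i')) = δ * M₁₁ i i')
    (h23 : ∀ (i : a) (j : b), M (Sum.inr (Sum.inl i)) (Sum.inr (Sum.inr j)) = m₁ i * m₂ j)
    (h31 : ∀ (j : b) (u : Unit), M (Sum.inr (Sum.inr j)) (Sum.inl u) = m₂ j)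
    (h32 : ∀ (j : b) (i : a), M (Sum.inr (Sum.inr j)) (Sum.inr (Sum.inl i)) = m₂ j * m₁ i)
    (h33 : ∀ j j' : b, M (Sum.inr (Sum.inr j)) (Sum.inr (Sum.inr j')) = M₂₂ j j')
    (hM : M.PosDef) :
    (∀ (i : a) (j : b), M⁻¹ (Sum.inr (Sum.inl i)) (Sum.inr (Sum.inr j)) = 0) ∧
    (∀ (j : b) (i : a), M⁻¹ (Sum.inr (Sum.inr j)) (Sum.inr (Sum.inl i)) = 0) := by
  classical
  -- δ > 0
  have hδ : 0 < δ := by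
    have hx : (Pi.single (Sum.inl ()) 1 : Unit ⊕ a ⊕ b → ℝ) ≠ 0 := by
      intro h
      have := congrFun h (Sum.inl ())
      simp at this
    have h := hM.dotProduct_mulVec_pos hx
    simpa [dotProduct, mulVec, Fintype.sum_sum_type, Pi.single_apply, h11] using h
  have hδ' : δ ≠ 0 := hδ.ne'
  -- the Schur complement B₀ = M₂₂ - δ⁻¹ m₂ m₂ᵀ
  set B₀ : Matrix b b ℝ := Matrix.of (fun j j' => M₂₂ j j' - δ⁻¹ * (m₂ j * m₂ j')) with hB₀def
  -- M is symmetric (real Hermitian)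
  have hMsymm : ∀ k l, M k l = M l k := by
    intro k l
    have := congrFun (congrFun hM.1 k) l
    simpa [conjTranspose_apply] using this.symm
  have hM22symm : ∀ j j', M₂₂ j j' = M₂₂ j' j := by
    intro j j'
    have := hMsymm (Sum.inr (Sum.inr j)) (Sum.inr (Sum.inr j'))
    rwa [h33, h33] at this
  -- B₀ is positive definite
  have hB₀ : B₀.PosDef := by
    refine Matrix.PosDef.of_dotProduct_mulVec_pos ?_ ?_
    · ext j j'
      simp only [conjTranspose_apply, hB₀def, Matrix.of_apply, star_trivial]
      rw [hM22symm j' j]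
      ring
    · intro x hx
      set s : ℝ := ∑ j, m₂ j * x j with hs
      set y : Unit ⊕ a ⊕ b → ℝ :=
        Sum.elim (fun _ => -(δ⁻¹ * s)) (Sum.elim 0 x) with hy
      have hyne : y ≠ 0 := by
        intro h
        apply hx
        funext j
        have := congrFun h (Sum.inr (Sum.inr j))
        simpa [hy] using this
      have inner : ∀ j, (∑ j', (M₂₂ j j' - δ⁻¹ * (m₂ j * m₂ j')) * x j')
          = (∑ j', M₂₂ j j' * x j') - δ⁻¹ * m₂ j * s := by
        intro j
        rw [hs, Finset.mul_sum, ← Finset.sum_sub_distrib]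
        exact Finset.sum_congr rfl fun j' _ => by ring
      have L : dotProduct (star x) (B₀ *ᵥ x)
          = (∑ j, x j * ∑ j', M₂₂ j j' * x j') - δ⁻¹ * s * s := by
        simp only [star_trivial, dotProduct, mulVec, hB₀def, Matrix.of_apply]
        rw [show (∑ j, x j * ∑ j', (M₂₂ j j' - δ⁻¹ * (m₂ j * m₂ j')) * x j')
            = ∑ j, (x j * (∑ j', M₂₂ j j' * x j') - δ⁻¹ * s * (m₂ j * x j)) from
          Finset.sum_congr rfl fun j _ => by rw [inner j]; ring]
        rw [Finset.sum_sub_distrib, ← Finset.mul_sum, ← hs]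
      have R : dotProduct (star y) (M *ᵥ y)
          = -(δ⁻¹ * s) * (δ * -(δ⁻¹ * s) + s)
            + ((∑ j, x j * ∑ j', M₂₂ j j' * x j') - δ⁻¹ * s * s) := by
        simp only [star_trivial, dotProduct, mulVec, hy, Fintype.sum_sum_type,
          Fintype.sum_unique, Sum.elim_inl, Sum.elim_inr, Pi.zero_apply,
          h11, h12, h13, h21, h22, h23, h31, h32, h33,
          mul_zero, zero_mul, Finset.sum_const_zero, add_zero, zero_add]
        rw [← hs]
        congr 1
        rw [show (∑ j, x j * (m₂ j * -(δ⁻¹ * s) + ∑ j', M₂₂ j j' * x j'))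
            = ∑ j, (x j * (∑ j', M₂₂ j j' * x j') - δ⁻¹ * s * (m₂ j * x j)) from
          Finset.sum_congr rfl fun j _ => by ring]
        rw [Finset.sum_sub_distrib, ← Finset.mul_sum, ← hs]
      have key : dotProduct (star x) (B₀ *ᵥ x) = dotProduct (star y) (M *ᵥ y) := by
        rw [L, R]
        field_simp
        ring
      rw [key]
      exact hM.dotProduct_mulVec_pos hyne
  have hB₀unit : IsUnit B₀.det := hB₀.det_pos.ne'.isUnit
  -- inverse equations
  have hMdet : IsUnit M.det := hM.det_pos.ne'.isUnit
  have hEM : M⁻¹ * M = 1 := Matrix.nonsing_inv_mul M hMdet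
  set E := M⁻¹ with hE
  set X : Matrix a b ℝ := Matrix.of (fun i j => E (Sum.inr (Sum.inl i)) (Sum.inr (Sum.inr j)))
    with hX
  have hXB : X * B₀ = 0 := by
    ext i j
    have e1 : (E * M) (Sum.inr (Sum.inl i)) (Sum.inr (Sum.inr j))
        = (1 : Matrix (Unit ⊕ a ⊕ b) (Unit ⊕ a ⊕ b) ℝ) (Sum.inr (Sum.inl i))
          (Sum.inr (Sum.inr j)) := by rw [hEM]
    have e2 : (E * M) (Sum.inr (Sum.inl i)) (Sum.inl ())
        = (1 : Matrix (Unit ⊕ a ⊕ b) (Unit ⊕ a ⊕ b) ℝ) (Sum.inr (Sum.inl i))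
          (Sum.inl ()) := by rw [hEM]
    rw [Matrix.one_apply_ne (by simp)] at e1
    rw [Matrix.one_apply_ne (by simp)] at e2
    simp only [Matrix.mul_apply, Fintype.sum_sum_type, Fintype.sum_unique,
      h11, h13, h21, h23, h31, h33] at e1 e2
    set t : ℝ := E (Sum.inr (Sum.inl i)) (Sum.inl default)
      + ∑ i', E (Sum.inr (Sum.inl i)) (Sum.inr (Sum.inl i')) * m₁ i' with ht
    have e1' : t * m₂ j + ∑ j', X i j' * M₂₂ j' j = 0 := by
      rw [ht, add_mul, Finset.sum_mul]
      rw [show (∑ i', E (Sum.inr (Sum.inl i)) (Sum.inr (Sum.inl i')) * m₁ i' * m₂ j)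
          = ∑ i', E (Sum.inr (Sum.inl i)) (Sum.inr (Sum.inl i')) * (m₁ i' * m₂ j) from
        Finset.sum_congr rfl (fun i' _ => by ring)]
      rw [show (∑ j', X i j' * M₂₂ j' j)
          = ∑ j', E (Sum.inr (Sum.inl i)) (Sum.inr (Sum.inr j')) * M₂₂ j' j from rfl]
      linarith [e1]
    have e2' : δ * t + ∑ j', X i j' * m₂ j' = 0 := by
      rw [ht, mul_add, Finset.mul_sum]
      rw [show (∑ i', δ * (E (Sum.inr (Sum.inl i)) (Sum.inr (Sum.inl i')) * m₁ i'))
          = ∑ i', E (Sum.inr (Sum.inl i)) (Sum.inr (Sum.inl i')) * (δ * m₁ i') from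
        Finset.sum_congr rfl (fun i' _ => by ring)]
      rw [show (∑ j', X i j' * m₂ j')
          = ∑ j', E (Sum.inr (Sum.inl i)) (Sum.inr (Sum.inr j')) * m₂ j' from rfl]
      linarith [e2]
    have entry : (X * B₀) i j = ∑ j', X i j' * M₂₂ j' j
        - δ⁻¹ * (∑ j', X i j' * m₂ j') * m₂ j := by
      rw [Matrix.mul_apply]
      simp only [hB₀def, Matrix.of_apply]
      rw [show (∑ j', X i j' * (M₂₂ j' j - δ⁻¹ * (m₂ j' * m₂ j)))
          = ∑ j', (X i j' * M₂₂ j' j - δ⁻¹ * (X i j' * m₂ j') * m₂ j) from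
        Finset.sum_congr rfl (fun j' _ => by ring)]
      rw [Finset.sum_sub_distrib]
      congr 1
      rw [Finset.mul_sum, Finset.sum_mul]
    rw [entry]
    have hsum : ∑ j', X i j' * M₂₂ j' j = -t * m₂ j := by linarith [e1']
    have htval : t = -δ⁻¹ * ∑ j', X i j' * m₂ j' := by
      field_simp
      linarith [e2']
    rw [hsum, htval]
    simp only [Matrix.zero_apply]
    ring
  have hX0 : X = 0 := by
    have h := congrArg (fun Y => Y * B₀⁻¹) hXB
    simpa [Matrix.mul_assoc, Matrix.mul_nonsing_inv B₀ hB₀unit] using h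
  have part1 : ∀ (i : a) (j : b),
      M⁻¹ (Sum.inr (Sum.inl i)) (Sum.inr (Sum.inr j)) = 0 := by
    intro i j
    have := congrFun (congrFun hX0 i) j
    simpa [hX] using this
  refine ⟨part1, ?_⟩
  intro j i
  rw [hE]
  have hherm : M⁻¹.IsHermitian := hM.1.inv
  have := congrFun (congrFun hherm (Sum.inr (Sum.inr j))) (Sum.inr (Sum.inl i))
  rw [conjTranspose_apply] at this
  rw [← this]
  simp [part1 i j]
end

section
/- Let α ∈ (0,2) and let Λ be a −α-homogeneous Borel measure on ℝ^d, finite on sets bounded away from the origin and satisfying ∫_{{|x_u| ≤ 1 ∀u∈U}} x_i² dΛ(x) < ∞ for all i, where U ⊆ {1,…,d} is nonempty. Define Λ^{(ε)} as the pushforward under x ↦ x / a_ε of the restriction of Λ to {x : |x_u| ≤ ε ∀u ∈ U}, with a_ε = ε^{1−α/2}. Then for every h > 0 and every coordinate i, Λ^{(ε)}({x : |x_i| ≥ h}) → 0 as ε ↓ 0. -/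
open MeasureTheory Filter
open scoped ENNReal

/-- Vanishing of the rescaled small-jump measure: `Λ^{(ε)}({x : |x_i| ≥ h}) → 0` as `ε ↓ 0`,
where `Λ^{(ε)}` is the pushforward under `x ↦ x / ε^{1-α/2}` of the restriction of a
`-α`-homogeneous measure `Λ` to `{x : |x_u| ≤ ε ∀ u ∈ U}`. -/
theorem stmt_16 {d : ℕ} (Λ : Measure (Fin d → ℝ)) (α : ℝ) (hα : 0 < α) (hα2 : α < 2)
    (hhom : ∀ c : ℝ, 0 < c → ∀ E : Set (Fin d → ℝ), MeasurableSet E →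
      Λ ((fun x => c • x) '' E) = ENNReal.ofReal (c ^ (-α)) * Λ E)
    (U : Set (Fin d)) (hU : U.Nonempty)
    (hmom : ∀ i : Fin d,
      ∫⁻ x in {x : Fin d → ℝ | ∀ u ∈ U, |x u| ≤ 1}, ENNReal.ofReal ((x i) ^ 2) ∂Λ < ∞)
    (h : ℝ) (hh : 0 < h) (i : Fin d) :
    Tendsto (fun ε : ℝ =>
        Measure.map (fun x : Fin d → ℝ => (ε ^ (1 - α / 2))⁻¹ • x)
          (Λ.restrict {x | ∀ u ∈ U, |x u| ≤ ε}) {x | h ≤ |x i|})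
      (nhdsWithin 0 (Set.Ioi 0)) (nhds 0) := by
  classical
  set box1 : Set (Fin d → ℝ) := {y | ∀ u ∈ U, |y u| ≤ 1} with hbox1
  have mbox1 : MeasurableSet box1 := by
    have : box1 = ⋂ u ∈ U, {y : Fin d → ℝ | |y u| ≤ 1} := by
      ext y; simp [hbox1]
    rw [this]
    exact MeasurableSet.biInter (Set.to_countable U) fun u _ =>
      measurableSet_le (measurable_pi_apply u).abs measurable_const
  have mT : ∀ r : ℝ, MeasurableSet {y : Fin d → ℝ | r ≤ |y i|} := fun r =>
    measurableSet_le measurable_const (measurable_pi_apply i).abs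
  set f : (Fin d → ℝ) → ℝ≥0∞ := fun y => ENNReal.ofReal ((y i) ^ 2) with hf
  have mf : Measurable f := ((measurable_pi_apply i).pow_const 2).ennreal_ofReal
  set ν : Measure (Fin d → ℝ) := (Λ.restrict box1).withDensity f with hν
  have hνapp : ∀ r : ℝ, ν {y | r ≤ |y i|} = ∫⁻ y in {y | r ≤ |y i|} ∩ box1, f y ∂Λ := by
    intro r
    rw [hν, withDensity_apply _ (mT r), Measure.restrict_restrict (mT r)]
  have hνfin : ν Set.univ ≠ ∞ := by
    rw [hν, withDensity_apply _ MeasurableSet.univ, Measure.restrict_univ]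
    exact (hmom i).ne
  -- continuity from above
  have hν0 : Tendsto (fun n : ℕ => ν {y | (n : ℝ) ≤ |y i|}) atTop (nhds 0) := by
    have hanti : Antitone fun n : ℕ => {y : Fin d → ℝ | (n : ℝ) ≤ |y i|} := by
      intro m n hmn y hy
      exact le_trans (show (m : ℝ) ≤ (n : ℝ) from Nat.cast_le.mpr hmn) hy
    have hiInter : ⋂ n : ℕ, {y : Fin d → ℝ | (n : ℝ) ≤ |y i|} = ∅ := by
      ext y
      simp only [Set.mem_iInter, Set.mem_setOf_eq, Set.mem_empty_iff_false, iff_false,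
        not_forall, not_le]
      obtain ⟨n, hn⟩ := exists_nat_gt |y i|
      exact ⟨n, hn⟩
    have := tendsto_measure_iInter_atTop (μ := ν)
      (fun n => (mT _).nullMeasurableSet) hanti
      ⟨0, ((measure_mono (Set.subset_univ _)).trans_lt hνfin.lt_top).ne⟩
    rw [hiInter, measure_empty] at this
    exact this
  -- the key pointwise bound
  have key : ∀ ε : ℝ, 0 < ε →
      Measure.map (fun x : Fin d → ℝ => (ε ^ (1 - α / 2))⁻¹ • x)
          (Λ.restrict {x | ∀ u ∈ U, |x u| ≤ ε}) {x | h ≤ |x i|}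
        ≤ ENNReal.ofReal (h ^ 2)⁻¹ * ν {y | h * ε ^ (-(α / 2)) ≤ |y i|} := by
    intro ε hε
    set c : ℝ := ε ^ (1 - α / 2) with hcdef
    have hc : 0 < c := Real.rpow_pos_of_pos hε _
    set M : ℝ := h * ε ^ (-(α / 2)) with hMdef
    have hεneg : (0 : ℝ) < ε ^ (-(α / 2)) := Real.rpow_pos_of_pos hε _
    have hM : 0 < M := mul_pos hh hεneg
    have key1 : ε * ε ^ (-(α / 2)) = c := by
      have h2 := Real.rpow_add hε 1 (-(α / 2))
      rw [Real.rpow_one] at h2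
      rw [hcdef, show (1 : ℝ) - α / 2 = 1 + -(α / 2) by ring, h2]
    have keyMc : ε * M = h * c := by rw [hMdef, ← key1]; ring
    have key2 : ε ^ (-α) = ε ^ (-(α / 2)) * ε ^ (-(α / 2)) := by
      rw [← Real.rpow_add hε]; congr 1; ring
    have hmeas_smul : Measurable fun x : Fin d → ℝ => c⁻¹ • x := measurable_const_smul _
    have mboxε : MeasurableSet {x : Fin d → ℝ | ∀ u ∈ U, |x u| ≤ ε} := by
      have : {x : Fin d → ℝ | ∀ u ∈ U, |x u| ≤ ε} = ⋂ u ∈ U, {y : Fin d → ℝ | |y u| ≤ ε} := by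
        ext y; simp
      rw [this]
      exact MeasurableSet.biInter (Set.to_countable U) fun u _ =>
        measurableSet_le (measurable_pi_apply u).abs measurable_const
    rw [Measure.map_apply hmeas_smul (mT h), Measure.restrict_apply (hmeas_smul (mT h))]
    have hsetA : MeasurableSet ({y : Fin d → ℝ | M ≤ |y i|} ∩ box1) := (mT M).inter mbox1
    have hsetEq : (fun x : Fin d → ℝ => c⁻¹ • x) ⁻¹' {x | h ≤ |x i|} ∩ {x | ∀ u ∈ U, |x u| ≤ ε}
        = (fun y : Fin d → ℝ => ε • y) '' ({y | M ≤ |y i|} ∩ box1) := by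
      ext x
      simp only [Set.mem_inter_iff, Set.mem_preimage, Set.mem_setOf_eq, Set.mem_image,
        hbox1, Pi.smul_apply, smul_eq_mul]
      constructor
      · rintro ⟨hx1, hx2⟩
        refine ⟨ε⁻¹ • x, ⟨?_, ?_⟩, ?_⟩
        · have habs : |c⁻¹ * x i| = c⁻¹ * |x i| := by
            rw [abs_mul, abs_inv, abs_of_pos hc]
          rw [habs] at hx1
          have hx1' : h * c ≤ |x i| := by
            rwa [inv_mul_eq_div, le_div_iff₀ hc] at hx1
          have : |(ε⁻¹ • x) i| = ε⁻¹ * |x i| := by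
            simp only [Pi.smul_apply, smul_eq_mul, abs_mul, abs_inv, abs_of_pos hε]
          rw [this]
          have hm2 : ε * M ≤ |x i| := by rw [keyMc]; exact hx1'
          have := mul_le_mul_of_nonneg_left hm2 (inv_pos.2 hε).le
          rwa [← mul_assoc, inv_mul_cancel₀ hε.ne', one_mul] at this
        · intro u hu
          have : |(ε⁻¹ • x) u| = ε⁻¹ * |x u| := by
            simp only [Pi.smul_apply, smul_eq_mul, abs_mul, abs_inv, abs_of_pos hε]
          rw [this]
          have := mul_le_mul_of_nonneg_left (hx2 u hu) (inv_pos.2 hε).le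
          rwa [inv_mul_cancel₀ hε.ne'] at this
        · exact smul_inv_smul₀ hε.ne' x
      · rintro ⟨y, ⟨hy1, hy2⟩, rfl⟩
        constructor
        · have h1 : |c⁻¹ * (ε • y) i| = c⁻¹ * (ε * |y i|) := by
            simp only [Pi.smul_apply, smul_eq_mul, abs_mul, abs_inv, abs_of_pos hc,
              abs_of_pos hε]
          rw [h1]
          have h2 : ε * M ≤ ε * |y i| := mul_le_mul_of_nonneg_left hy1 hε.le
          rw [keyMc] at h2
          have h3 := mul_le_mul_of_nonneg_left h2 (inv_pos.2 hc).le
          rwa [show c⁻¹ * (h * c) = h by field_simp] at h3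
        · intro u hu
          have h1 : |(ε • y) u| = ε * |y u| := by
            simp only [Pi.smul_apply, smul_eq_mul, abs_mul, abs_of_pos hε]
          rw [h1]
          calc ε * |y u| ≤ ε * 1 := mul_le_mul_of_nonneg_left (hy2 u hu) hε.le
            _ = ε := mul_one ε
    rw [hsetEq, hhom ε hε _ hsetA]
    -- now bound via the second moment
    have step : ENNReal.ofReal (ε ^ (-α)) * Λ ({y : Fin d → ℝ | M ≤ |y i|} ∩ box1)
        ≤ ENNReal.ofReal (h ^ 2)⁻¹ * ∫⁻ y in {y : Fin d → ℝ | M ≤ |y i|} ∩ box1, f y ∂Λ := by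
      have e1 : ENNReal.ofReal (ε ^ (-α)) * Λ ({y : Fin d → ℝ | M ≤ |y i|} ∩ box1)
          = ∫⁻ _ in {y : Fin d → ℝ | M ≤ |y i|} ∩ box1, ENNReal.ofReal (ε ^ (-α)) ∂Λ := by
        rw [setLIntegral_const]
      rw [e1]
      have e2 : ∫⁻ y in {y : Fin d → ℝ | M ≤ |y i|} ∩ box1, ENNReal.ofReal (ε ^ (-α)) ∂Λ
          ≤ ∫⁻ y in {y : Fin d → ℝ | M ≤ |y i|} ∩ box1,
              ENNReal.ofReal ((h ^ 2)⁻¹ * (y i) ^ 2) ∂Λ := by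
        apply setLIntegral_mono (by fun_prop)
        intro y hy
        apply ENNReal.ofReal_le_ofReal
        have hyi : M ≤ |y i| := hy.1
        have hsq : M ^ 2 ≤ (y i) ^ 2 := by
          rw [← sq_abs (y i)]
          exact pow_le_pow_left₀ hM.le hyi 2
        have hM2 : M ^ 2 = h ^ 2 * ε ^ (-α) := by
          rw [hMdef, key2]; ring
        rw [hM2] at hsq
        have hh2 : (0 : ℝ) < h ^ 2 := by positivity
        rw [inv_mul_eq_div, le_div_iff₀ hh2]
        nlinarith [hsq]
      refine e2.trans (le_of_eq ?_)
      have e3 : ∀ y : Fin d → ℝ, ENNReal.ofReal ((h ^ 2)⁻¹ * (y i) ^ 2)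
          = ENNReal.ofReal (h ^ 2)⁻¹ * f y := by
        intro y
        rw [hf, ← ENNReal.ofReal_mul (by positivity)]
      simp_rw [e3]
      rw [lintegral_const_mul _ mf]
    calc ENNReal.ofReal (ε ^ (-α)) * Λ ({y : Fin d → ℝ | M ≤ |y i|} ∩ box1)
        ≤ ENNReal.ofReal (h ^ 2)⁻¹ * ∫⁻ y in {y : Fin d → ℝ | M ≤ |y i|} ∩ box1, f y ∂Λ :=
          step
      _ = ENNReal.ofReal (h ^ 2)⁻¹ * ν {y | M ≤ |y i|} := by rw [hνapp M]
  -- the upper bound tends to zero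
  have hup : Tendsto (fun ε : ℝ =>
      ENNReal.ofReal (h ^ 2)⁻¹ * ν {y | h * ε ^ (-(α / 2)) ≤ |y i|})
      (nhdsWithin 0 (Set.Ioi 0)) (nhds 0) := by
    have hν' : Tendsto (fun ε : ℝ => ν {y | h * ε ^ (-(α / 2)) ≤ |y i|})
        (nhdsWithin 0 (Set.Ioi 0)) (nhds 0) := by
      rw [ENNReal.tendsto_nhds_zero]
      intro δ hδ
      obtain ⟨n, hn⟩ := (hν0.eventually_le_const hδ).exists
      -- M tends to atTop
      have h1 : Tendsto (fun ε : ℝ => ε ^ (α / 2)) (nhdsWithin 0 (Set.Ioi 0))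
          (nhdsWithin 0 (Set.Ioi 0)) := by
        apply tendsto_nhdsWithin_of_tendsto_nhds_of_eventually_within
        · have hcont := (Real.continuousAt_rpow_const 0 (α / 2)
            (Or.inr (by positivity))).tendsto
          have h0 : (0 : ℝ) ^ (α / 2) = 0 := Real.zero_rpow (by positivity)
          rw [h0] at hcont
          exact hcont.mono_left nhdsWithin_le_nhds
        · filter_upwards [self_mem_nhdsWithin] with ε hε
          exact Real.rpow_pos_of_pos hε _
      have h2 : Tendsto (fun ε : ℝ => (ε ^ (α / 2))⁻¹) (nhdsWithin 0 (Set.Ioi 0)) atTop :=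
        tendsto_inv_nhdsGT_zero.comp h1
      have h3 : Tendsto (fun ε : ℝ => ε ^ (-(α / 2))) (nhdsWithin 0 (Set.Ioi 0)) atTop := by
        apply h2.congr'
        filter_upwards [self_mem_nhdsWithin] with ε hε
        exact (Real.rpow_neg (le_of_lt hε) _).symm
      have hMtop : Tendsto (fun ε : ℝ => h * ε ^ (-(α / 2)))
          (nhdsWithin 0 (Set.Ioi 0)) atTop := h3.const_mul_atTop hh
      filter_upwards [hMtop.eventually_ge_atTop (n : ℝ)] with ε hεn
      calc ν {y | h * ε ^ (-(α / 2)) ≤ |y i|} ≤ ν {y | (n : ℝ) ≤ |y i|} :=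
            measure_mono fun y hy => le_trans hεn hy
        _ ≤ δ := hn
    have := ENNReal.Tendsto.const_mul (a := ENNReal.ofReal (h ^ 2)⁻¹) hν' (Or.inr ENNReal.ofReal_ne_top)
    simpa using this
  -- squeeze
  refine tendsto_of_tendsto_of_tendsto_of_le_of_le' tendsto_const_nhds hup ?_ ?_
  · filter_upwards with ε using zero_le
  · filter_upwards [self_mem_nhdsWithin] with ε hε
    exact key ε hε
end
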